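/- Let H be a real Hilbert space and A : H → H be monotone and β-Lipschitz continuous. Then the resolvent J_A = (Id + A)^{-1} satisfies 2⟨J_Ax − J_Ay, x − y⟩ ≥ ‖x − y‖² + (1 − β²)‖J_Ax − J_Ay‖² for all x, y ∈ H. -/
import Mathlib

open RealInnerProductSpace

theorem resolvent_of_monotone_lipschitz
    {H : Type*} [NormedAddCommGroup H] [InnerProductSpace ℝ H]
    (β : ℝ) (A J : H → H)
    (hmono : ∀ x y : H, (0 : ℝ) ≤ ⟪A x - A y, x - y⟫)
    (hlip : ∀ x y : H, ‖A x - A y‖ ≤ β * ‖x - y‖)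
    (hJ : ∀ x : H, J x + A (J x) = x) :
    ∀ x y : H,
      2 * ⟪J x - J y, x - y⟫ ≥
        ‖x - y‖ ^ 2 + (1 - β ^ 2) * ‖J x - J y‖ ^ 2 := by
  intro x y
  set u := J x
  set v := J y
  have hx : x - y = (u - v) + (A u - A v) := by
    rw [← hJ x, ← hJ y]
    abel
  have hnorm : ‖x - y‖ ^ 2 = ‖u - v‖ ^ 2 + 2 * ⟪u - v, A u - A v⟫ + ‖A u - A v‖ ^ 2 := by
    rw [hx, @norm_add_sq_real]
  have hinner : ⟪u - v, x - y⟫ = ‖u - v‖ ^ 2 + ⟪u - v, A u - A v⟫ := by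
    rw [hx, inner_add_right, real_inner_self_eq_norm_sq]
  have hl : ‖A u - A v‖ ≤ β * ‖u - v‖ := hlip u v
  have hnn : (0:ℝ) ≤ ‖A u - A v‖ := norm_nonneg _
  nlinarith [sq_nonneg (‖u - v‖), sq_nonneg (β * ‖u - v‖ - ‖A u - A v‖)]
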